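/- arXiv:1702.05896 — 3 statements merged into one kernel-verified Lean document; each statement's English description precedes it below -/
import Mathlib

section
/- Let d be a positive integer and δ > d/2. Define Φ_{d,δ}(t) = (1/B(2δ−d, δ)) ∫_t^1 (s²−t²)^{δ−(d+1)/2} (1−s)^{δ−1} ds for 0 ≤ t ≤ 1 and Φ_{d,δ}(t) = 0 for t > 1. Then the defining integral converges for every t ∈ [0,1], Φ_{d,δ} is continuous and strictly decreasing on [0,1] with 0 ≤ Φ_{d,δ} ≤ 1, and there exist positive constants c₁, c₂ such that c₁ (1−t)^{2δ−(d+1)/2} ≤ Φ_{d,δ}(t) ≤ c₂ (1−t)^{2δ−(d+1)/2} for all t ∈ [0,1]. -/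
open MeasureTheory Set intervalIntegral

private lemma betaAux {p q : ℝ} (hp : -1 < p) (hq : -1 < q) :
    IntegrableOn (fun s => s ^ p * (1 - s) ^ q) (Ioo (0:ℝ) 1) := by
  have meas : AEStronglyMeasurable (fun s : ℝ => s ^ p * (1 - s) ^ q) volume := by
    have : Measurable (fun s : ℝ => s ^ p * (1 - s) ^ q) := by fun_prop
    exact this.aestronglyMeasurable
  have h1 : IntegrableOn (fun s => s ^ p * (1 - s) ^ q) (Ioc (0:ℝ) 2⁻¹) := by
    have hint : IntegrableOn (fun s : ℝ => s ^ p) (Ioc (0:ℝ) 2⁻¹) := by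
      have := intervalIntegral.intervalIntegrable_rpow' (a := (0:ℝ)) (b := 2⁻¹) hp
      rwa [intervalIntegrable_iff_integrableOn_Ioc_of_le (by norm_num)] at this
    set C : ℝ := max 1 ((2:ℝ)⁻¹ ^ q) with hC
    refine Integrable.mono (hint.const_mul C) (meas.restrict) ?_
    refine (ae_restrict_iff' measurableSet_Ioc).2 (ae_of_all _ fun s hs => ?_)
    have hs0 : 0 < s := hs.1
    have hs2 : s ≤ 2⁻¹ := hs.2
    have h1s : (2:ℝ)⁻¹ ≤ 1 - s := by linarith
    have hbq : (1 - s) ^ q ≤ C := by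
      rcases le_or_gt 0 q with hq0 | hq0
      · refine le_max_of_le_left (Real.rpow_le_one (by linarith) (by linarith) hq0)
      · exact le_max_of_le_right (Real.rpow_le_rpow_of_nonpos (by norm_num) h1s hq0.le)
    have hb0 : (0:ℝ) ≤ (1 - s) ^ q := Real.rpow_nonneg (by linarith) _
    have hp0 : (0:ℝ) ≤ s ^ p := Real.rpow_nonneg hs0.le _
    rw [Real.norm_eq_abs, abs_of_nonneg (mul_nonneg hp0 hb0), Real.norm_eq_abs,
      abs_of_nonneg (by positivity : (0:ℝ) ≤ C * s ^ p), mul_comm C]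
    exact mul_le_mul_of_nonneg_left hbq hp0
  have h2 : IntegrableOn (fun s => s ^ p * (1 - s) ^ q) (Ioo (2⁻¹:ℝ) 1) := by
    have hint : IntegrableOn (fun s : ℝ => (1 - s) ^ q) (Ioc (2⁻¹:ℝ) 1) := by
      have h0 := intervalIntegral.intervalIntegrable_rpow' (a := (0:ℝ)) (b := 2⁻¹) hq
      have h1 := (h0.comp_sub_left 1).symm
      have h2 : (1:ℝ) - 2⁻¹ = 2⁻¹ := by norm_num
      rw [sub_zero, h2] at h1
      rwa [intervalIntegrable_iff_integrableOn_Ioc_of_le (by norm_num)] at h1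
    set C : ℝ := max 1 ((2:ℝ)⁻¹ ^ p) with hC
    refine Integrable.mono ((hint.mono_set Ioo_subset_Ioc_self).const_mul C) meas.restrict ?_
    refine (ae_restrict_iff' measurableSet_Ioo).2 (ae_of_all _ fun s hs => ?_)
    have hs0 : (2:ℝ)⁻¹ < s := hs.1
    have hs2 : s < 1 := hs.2
    have hsp : s ^ p ≤ C := by
      rcases le_or_gt 0 p with hp0 | hp0
      · exact le_max_of_le_left (Real.rpow_le_one (by linarith) hs2.le hp0)
      · exact le_max_of_le_right (Real.rpow_le_rpow_of_nonpos (by norm_num) hs0.le hp0.le)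
    have hb0 : (0:ℝ) ≤ (1 - s) ^ q := Real.rpow_nonneg (by linarith) _
    have hp0 : (0:ℝ) ≤ s ^ p := Real.rpow_nonneg (by linarith) _
    rw [Real.norm_eq_abs, abs_of_nonneg (mul_nonneg hp0 hb0), Real.norm_eq_abs,
      abs_of_nonneg (by positivity : (0:ℝ) ≤ C * (1 - s) ^ q)]
    exact mul_le_mul_of_nonneg_right hsp hb0
  exact (h1.union h2).mono_set (fun s hs => by
    rcases le_or_gt s 2⁻¹ with h | h
    · exact Or.inl ⟨hs.1, h⟩
    · exact Or.inr ⟨h, hs.2⟩)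

private lemma posInt {f : ℝ → ℝ} {a b : ℝ} (hab : a < b) (hf : IntegrableOn f (Ioo a b))
    (hpos : ∀ x ∈ Ioo a b, 0 < f x) : 0 < ∫ x in Ioo a b, f x := by
  rw [setIntegral_pos_iff_support_of_nonneg_ae
    ((ae_restrict_iff' measurableSet_Ioo).2 (ae_of_all _ fun x hx => (hpos x hx).le)) hf]
  refine lt_of_lt_of_le ?_ (measure_mono (fun x hx => ⟨(hpos x hx).ne', hx⟩))
  rw [Real.volume_Ioo]
  exact ENNReal.ofReal_pos.2 (by linarith)

private lemma subPointwise {α δ t u : ℝ} (ht0 : 0 ≤ t) (ht1 : t < 1) (hu : u ∈ Ioo (0:ℝ) 1) :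
    (((1-t)*u + t) ^ 2 - t ^ 2) ^ α * (1 - ((1-t)*u + t)) ^ (δ-1)
      = (1-t) ^ (α+δ-1) * (u ^ α * (u + t*(2-u)) ^ α * (1-u) ^ (δ-1)) := by
  obtain ⟨hu0, hu1⟩ := hu
  have hc : (0:ℝ) < 1 - t := by linarith
  have e1 : ((1-t)*u + t) ^ 2 - t ^ 2 = ((1-t)*u) * (u + t*(2-u)) := by ring
  have e2 : 1 - ((1-t)*u + t) = (1-t)*(1-u) := by ring
  rw [e1, e2, Real.mul_rpow (by positivity) (by nlinarith), Real.mul_rpow hc.le hu0.le,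
    Real.mul_rpow hc.le (by linarith), show α+δ-1 = α + (δ-1) by ring, Real.rpow_add hc]
  ring

private lemma subIdentity (α δ : ℝ) {t : ℝ} (ht0 : 0 ≤ t) (ht1 : t < 1) :
    ∫ s in Ioo t 1, (s ^ 2 - t ^ 2) ^ α * (1 - s) ^ (δ-1)
      = (1-t) ^ (α+δ) *
        ∫ u in Ioo (0:ℝ) 1, u ^ α * (u + t*(2-u)) ^ α * (1-u) ^ (δ-1) := by
  have hc : (0:ℝ) < 1 - t := by linarith
  set f : ℝ → ℝ := fun s => (s ^ 2 - t ^ 2) ^ α * (1 - s) ^ (δ-1) with hf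
  have step1 : ∫ s in Ioo t 1, f s = ∫ s in t..1, f s := by
    rw [intervalIntegral.integral_of_le ht1.le, integral_Ioc_eq_integral_Ioo]
  have step2 : ∫ u in (0:ℝ)..1, f ((1-t)*u + t) = (1-t)⁻¹ • ∫ x in t..1, f x := by
    rw [intervalIntegral.integral_comp_mul_add f hc.ne' t]
    norm_num
  have step3 : ∫ s in t..1, f s = (1-t) * ∫ u in (0:ℝ)..1, f ((1-t)*u + t) := by
    rw [step2, smul_eq_mul, ← mul_assoc, mul_inv_cancel₀ hc.ne', one_mul]
  have step4 : ∫ u in (0:ℝ)..1, f ((1-t)*u + t)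
      = (1-t) ^ (α+δ-1) * ∫ u in Ioo (0:ℝ) 1, u ^ α * (u + t*(2-u)) ^ α * (1-u) ^ (δ-1) := by
    rw [intervalIntegral.integral_of_le zero_le_one, integral_Ioc_eq_integral_Ioo,
      ← MeasureTheory.integral_const_mul]
    exact setIntegral_congr_fun measurableSet_Ioo (fun u hu => subPointwise ht0 ht1 hu)
  have e : (1-t) * (1-t) ^ (α+δ-1) = (1-t) ^ (α+δ) := by
    rw [show α+δ = 1+(α+δ-1) by ring, Real.rpow_add hc, Real.rpow_one]
    congr 1
    ring
  rw [step1, step3, step4, ← mul_assoc, e]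
section
variable {α δ : ℝ}

private lemma midBound {t u : ℝ} (ht : t ∈ Icc (0:ℝ) 1) (hu : u ∈ Ioo (0:ℝ) 1) :
    min (u ^ α) (2 ^ α) ≤ (u + t*(2-u)) ^ α ∧
      (u + t*(2-u)) ^ α ≤ max (u ^ α) (2 ^ α) := by
  obtain ⟨hu0, hu1⟩ := hu
  have hx1 : u ≤ u + t*(2-u) := by nlinarith [ht.1, ht.2]
  have hx2 : u + t*(2-u) ≤ 2 := by nlinarith [ht.1, ht.2]
  have hx0 : 0 < u + t*(2-u) := by linarith
  rcases le_or_gt 0 α with hα | hα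
  · exact ⟨le_trans (min_le_left _ _) (Real.rpow_le_rpow hu0.le hx1 hα),
      le_trans (Real.rpow_le_rpow hx0.le hx2 hα) (le_max_right _ _)⟩
  · exact ⟨le_trans (min_le_right _ _) (Real.rpow_le_rpow_of_nonpos hx0 hx2 hα.le),
      le_trans (Real.rpow_le_rpow_of_nonpos hu0 hx1 hα.le) (le_max_left _ _)⟩

private lemma hBound {t u : ℝ} (ht : t ∈ Icc (0:ℝ) 1) (hu : u ∈ Ioo (0:ℝ) 1) :
    u ^ α * min (u ^ α) (2 ^ α) * (1-u) ^ (δ-1)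
      ≤ u ^ α * (u + t*(2-u)) ^ α * (1-u) ^ (δ-1) ∧
    u ^ α * (u + t*(2-u)) ^ α * (1-u) ^ (δ-1)
      ≤ u ^ α * max (u ^ α) (2 ^ α) * (1-u) ^ (δ-1) := by
  obtain ⟨h1, h2⟩ := midBound (α := α) ht hu
  have hu0 : (0:ℝ) ≤ u ^ α := Real.rpow_nonneg hu.1.le _
  have hv0 : (0:ℝ) ≤ (1-u) ^ (δ-1) := Real.rpow_nonneg (by linarith [hu.2]) _
  constructor
  · exact mul_le_mul_of_nonneg_right (mul_le_mul_of_nonneg_left h1 hu0) hv0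
  · exact mul_le_mul_of_nonneg_right (mul_le_mul_of_nonneg_left h2 hu0) hv0

private lemma hiInt (hα2 : -1 < 2*α) (hδ1 : -1 < δ - 1) :
    IntegrableOn (fun u => u ^ α * max (u ^ α) (2 ^ α) * (1-u) ^ (δ-1)) (Ioo (0:ℝ) 1) := by
  have hα1 : -1 < α := by linarith
  have hB : IntegrableOn
      (fun u => u ^ (2*α) * (1-u) ^ (δ-1) + 2 ^ α * (u ^ α * (1-u) ^ (δ-1))) (Ioo (0:ℝ) 1) :=
    (betaAux hα2 hδ1).add ((betaAux hα1 hδ1).const_mul _)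
  have meas : Measurable (fun u : ℝ => u ^ α * max (u ^ α) (2 ^ α) * (1-u) ^ (δ-1)) := by
    fun_prop
  refine Integrable.mono hB meas.aestronglyMeasurable.restrict ?_
  refine (ae_restrict_iff' measurableSet_Ioo).2 (ae_of_all _ fun u hu => ?_)
  obtain ⟨hu0, hu1⟩ := hu
  have h1 : (0:ℝ) ≤ u ^ α := Real.rpow_nonneg hu0.le _
  have h2 : (0:ℝ) ≤ (1-u) ^ (δ-1) := Real.rpow_nonneg (by linarith) _
  have h3 : (0:ℝ) ≤ (2:ℝ) ^ α := Real.rpow_nonneg (by norm_num) _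
  have key : u ^ α * max (u ^ α) (2 ^ α) * (1-u) ^ (δ-1)
      ≤ u ^ (2*α) * (1-u) ^ (δ-1) + 2 ^ α * (u ^ α * (1-u) ^ (δ-1)) := by
    have e : u ^ α * u ^ α = u ^ (2*α) := by
      rw [← Real.rpow_add hu0, two_mul]
    have : max (u ^ α) (2 ^ α) ≤ u ^ α + 2 ^ α := max_le (by linarith) (by linarith)
    nlinarith [mul_le_mul_of_nonneg_left this h1, mul_le_mul_of_nonneg_right
      (mul_le_mul_of_nonneg_left this h1) h2]
  rw [Real.norm_eq_abs, abs_of_nonneg (by positivity), Real.norm_eq_abs]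
  exact key.trans (le_abs_self _)

private lemma loInt (hα2 : -1 < 2*α) (hδ1 : -1 < δ - 1) :
    IntegrableOn (fun u => u ^ α * min (u ^ α) (2 ^ α) * (1-u) ^ (δ-1)) (Ioo (0:ℝ) 1) := by
  refine Integrable.mono (hiInt hα2 hδ1) ?_ ?_
  · have : Measurable (fun u : ℝ => u ^ α * min (u ^ α) (2 ^ α) * (1-u) ^ (δ-1)) := by fun_prop
    exact this.aestronglyMeasurable.restrict
  refine (ae_restrict_iff' measurableSet_Ioo).2 (ae_of_all _ fun u hu => ?_)
  obtain ⟨hu0, hu1⟩ := hu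
  have h1 : (0:ℝ) ≤ u ^ α := Real.rpow_nonneg hu0.le _
  have h2 : (0:ℝ) ≤ (1-u) ^ (δ-1) := Real.rpow_nonneg (by linarith) _
  have h3 : (0:ℝ) ≤ min (u ^ α) ((2:ℝ) ^ α) :=
    le_min h1 (Real.rpow_nonneg (by norm_num) _)
  rw [Real.norm_eq_abs, abs_of_nonneg (by positivity), Real.norm_eq_abs,
    abs_of_nonneg (by positivity)]
  exact mul_le_mul_of_nonneg_right
    (mul_le_mul_of_nonneg_left (min_le_max) h1) h2

private lemma htInt (hα2 : -1 < 2*α) (hδ1 : -1 < δ - 1) {t : ℝ} (ht : t ∈ Icc (0:ℝ) 1) :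
    IntegrableOn (fun u => u ^ α * (u + t*(2-u)) ^ α * (1-u) ^ (δ-1)) (Ioo (0:ℝ) 1) := by
  refine Integrable.mono (hiInt hα2 hδ1) ?_ ?_
  · have : Measurable (fun u : ℝ => u ^ α * (u + t*(2-u)) ^ α * (1-u) ^ (δ-1)) := by fun_prop
    exact this.aestronglyMeasurable.restrict
  refine (ae_restrict_iff' measurableSet_Ioo).2 (ae_of_all _ fun u hu => ?_)
  obtain ⟨hu0, hu1⟩ := hu
  have hx0 : 0 < u + t*(2-u) := by nlinarith [ht.1, ht.2]
  have n1 : (0:ℝ) ≤ u ^ α * (u + t*(2-u)) ^ α * (1-u) ^ (δ-1) :=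
    mul_nonneg (mul_nonneg (Real.rpow_nonneg hu0.le _) (Real.rpow_nonneg hx0.le _))
      (Real.rpow_nonneg (by linarith) _)
  have n2 : (0:ℝ) ≤ u ^ α * max (u ^ α) (2 ^ α) * (1-u) ^ (δ-1) :=
    mul_nonneg (mul_nonneg (Real.rpow_nonneg hu0.le _)
      (le_max_iff.2 (Or.inl (Real.rpow_nonneg hu0.le _)))) (Real.rpow_nonneg (by linarith) _)
  rw [Real.norm_eq_abs, abs_of_nonneg n1, Real.norm_eq_abs, abs_of_nonneg n2]
  exact (hBound ht ⟨hu0, hu1⟩).2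


private lemma HCont (hα2 : -1 < 2*α) (hδ1 : -1 < δ - 1) :
    ContinuousOn (fun t : ℝ => ∫ u in Ioo (0:ℝ) 1,
      u ^ α * (u + t*(2-u)) ^ α * (1-u) ^ (δ-1)) (Icc (0:ℝ) 1) := by
  intro x₀ hx₀
  apply MeasureTheory.continuousWithinAt_of_dominated
    (bound := fun u => u ^ α * max (u ^ α) (2 ^ α) * (1-u) ^ (δ-1))
  · refine Filter.Eventually.of_forall (fun x => ?_)
    have : Measurable (fun u : ℝ => u ^ α * (u + x*(2-u)) ^ α * (1-u) ^ (δ-1)) := by fun_prop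
    exact this.aestronglyMeasurable.restrict
  · refine eventually_mem_nhdsWithin.mono (fun x hx => ?_)
    refine (ae_restrict_iff' measurableSet_Ioo).2 (ae_of_all _ fun u hu => ?_)
    obtain ⟨hu0, hu1⟩ := hu
    have hx0 : 0 < u + x*(2-u) := by nlinarith [hx.1, hx.2]
    have n1 : (0:ℝ) ≤ u ^ α * (u + x*(2-u)) ^ α * (1-u) ^ (δ-1) :=
      mul_nonneg (mul_nonneg (Real.rpow_nonneg hu0.le _) (Real.rpow_nonneg hx0.le _))
        (Real.rpow_nonneg (by linarith) _)
    rw [Real.norm_eq_abs, abs_of_nonneg n1]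
    exact (hBound hx ⟨hu0, hu1⟩).2
  · exact hiInt hα2 hδ1
  · refine (ae_restrict_iff' measurableSet_Ioo).2 (ae_of_all _ fun u hu => ?_)
    obtain ⟨hu0, hu1⟩ := hu
    have hpos : 0 < u + x₀*(2-u) := by nlinarith [hx₀.1, hx₀.2]
    have cb : ContinuousAt (fun x : ℝ => u + x*(2-u)) x₀ :=
      (continuous_const.add (continuous_id.mul continuous_const)).continuousAt
    have c1 : ContinuousAt (fun x : ℝ => (u + x*(2-u)) ^ α) x₀ :=
      cb.rpow_const (Or.inl hpos.ne')
    exact ((continuousAt_const.mul c1).mul continuousAt_const).continuousWithinAt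

end

/-- Euler beta function. -/
noncomputable def Beta (a b : ℝ) : ℝ := ∫ t in Ioo (0:ℝ) 1, t ^ (a - 1) * (1 - t) ^ (b - 1)

theorem stmt12 (d : ℕ) (hd : 0 < d) (δ : ℝ) (hδ : (d : ℝ) / 2 < δ)
    (Φ : ℝ → ℝ)
    (hΦ₁ : ∀ t ∈ Icc (0 : ℝ) 1,
      Φ t = 1 / Beta (2 * δ - (d : ℝ)) δ *
        ∫ s in Ioo t 1, (s ^ 2 - t ^ 2) ^ (δ - ((d : ℝ) + 1) / 2) * (1 - s) ^ (δ - 1))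
    (hΦ₂ : ∀ t : ℝ, 1 < t → Φ t = 0) :
    (∀ t ∈ Icc (0 : ℝ) 1,
      IntegrableOn (fun s => (s ^ 2 - t ^ 2) ^ (δ - ((d : ℝ) + 1) / 2) * (1 - s) ^ (δ - 1))
        (Ioo t 1)) ∧
    ContinuousOn Φ (Icc 0 1) ∧ StrictAntiOn Φ (Icc 0 1) ∧
    (∀ t ∈ Icc (0 : ℝ) 1, 0 ≤ Φ t ∧ Φ t ≤ 1) ∧
    ∃ c₁ c₂ : ℝ, 0 < c₁ ∧ 0 < c₂ ∧
      ∀ t ∈ Icc (0 : ℝ) 1,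
        c₁ * (1 - t) ^ (2 * δ - ((d : ℝ) + 1) / 2) ≤ Φ t ∧
          Φ t ≤ c₂ * (1 - t) ^ (2 * δ - ((d : ℝ) + 1) / 2) := by
  set α : ℝ := δ - ((d : ℝ) + 1) / 2 with hαdef
  have hd1 : (1:ℝ) ≤ (d:ℝ) := by exact_mod_cast hd
  have hδ0 : 0 < δ := by linarith
  have hα2 : -1 < 2*α := by rw [hαdef]; push_cast; linarith
  have hα1 : -1 < α := by linarith
  have hδ1 : -1 < δ - 1 := by linarith
  have hp : 0 < α + δ := by rw [hαdef]; push_cast; linarith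
  -- Beta positivity
  have hBexp : -1 < 2*δ - (d:ℝ) - 1 := by linarith
  have hBeta : 0 < Beta (2*δ - (d:ℝ)) δ := by
    rw [Beta]
    refine posInt zero_lt_one (betaAux (by linarith) hδ1) (fun x hx => ?_)
    exact mul_pos (Real.rpow_pos_of_pos hx.1 _) (Real.rpow_pos_of_pos (by linarith [hx.2]) _)
  set C : ℝ := 1 / Beta (2*δ - (d:ℝ)) δ with hCdef
  have hC : 0 < C := by positivity
  set H : ℝ → ℝ := fun t => ∫ u in Ioo (0:ℝ) 1, u ^ α * (u + t*(2-u)) ^ α * (1-u) ^ (δ-1)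
    with hHdef
  set L : ℝ := ∫ u in Ioo (0:ℝ) 1, u ^ α * min (u ^ α) (2 ^ α) * (1-u) ^ (δ-1) with hLdef
  set U : ℝ := ∫ u in Ioo (0:ℝ) 1, u ^ α * max (u ^ α) (2 ^ α) * (1-u) ^ (δ-1) with hUdef
  have hLH : ∀ t ∈ Icc (0:ℝ) 1, L ≤ H t := fun t ht =>
    setIntegral_mono_on (loInt hα2 hδ1) (htInt hα2 hδ1 ht) measurableSet_Ioo
      (fun u hu => (hBound ht hu).1)
  have hHU : ∀ t ∈ Icc (0:ℝ) 1, H t ≤ U := fun t ht =>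
    setIntegral_mono_on (htInt hα2 hδ1 ht) (hiInt hα2 hδ1) measurableSet_Ioo
      (fun u hu => (hBound ht hu).2)
  have hL : 0 < L := by
    refine posInt zero_lt_one (loInt hα2 hδ1) (fun u hu => ?_)
    have h1 : (0:ℝ) < u ^ α := Real.rpow_pos_of_pos hu.1 _
    have h2 : (0:ℝ) < (1-u) ^ (δ-1) := Real.rpow_pos_of_pos (by linarith [hu.2]) _
    have h3 : (0:ℝ) < min (u ^ α) ((2:ℝ) ^ α) :=
      lt_min h1 (Real.rpow_pos_of_pos (by norm_num) _)
    positivity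
  have hU : 0 < U := lt_of_lt_of_le hL ((hLH 0 (by constructor <;> norm_num)).trans
    (hHU 0 (by constructor <;> norm_num)))
  -- integrability of the original integrand
  have intPart : ∀ t ∈ Icc (0:ℝ) 1,
      IntegrableOn (fun s => (s ^ 2 - t ^ 2) ^ α * (1 - s) ^ (δ - 1)) (Ioo t 1) := by
    intro t ht
    rcases eq_or_lt_of_le ht.2 with h1 | h1
    · rw [h1]; simp
    have hc : (0:ℝ) < 1 - t := by linarith
    have base : IntegrableOn
        (fun u => (1-t) ^ (α+δ-1) * (u ^ α * (u + t*(2-u)) ^ α * (1-u) ^ (δ-1)))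
        (Ioo (0:ℝ) 1) := (htInt hα2 hδ1 ht).const_mul _
    have comp0 : IntegrableOn (fun u => ((((1-t)*u + t) ^ 2 - t ^ 2) ^ α
        * (1 - ((1-t)*u + t)) ^ (δ-1))) (Ioo (0:ℝ) 1) := by
      refine base.congr_fun (fun u hu => ?_) measurableSet_Ioo
      exact (subPointwise ht.1 h1 hu).symm
    have ii0 : IntervalIntegrable
        (fun u => (((1-t)*u + t) ^ 2 - t ^ 2) ^ α * (1 - ((1-t)*u + t)) ^ (δ-1))
        volume 0 1 := by
      rwa [intervalIntegrable_iff_integrableOn_Ioo_of_le zero_le_one]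
    set g : ℝ → ℝ := fun s => (s ^ 2 - t ^ 2) ^ α * (1 - s) ^ (δ - 1) with hgdef
    have ii1 : IntervalIntegrable (fun x => g (x + t)) volume 0 (1-t) := by
      have h2 := ii0.comp_mul_left (c := (1-t)⁻¹)
      simp only [← mul_assoc, mul_inv_cancel₀ hc.ne', one_mul] at h2
      have e0 : (0:ℝ) / (1-t)⁻¹ = 0 := by simp
      have e1 : (1:ℝ) / (1-t)⁻¹ = 1 - t := by field_simp
      rw [e0, e1] at h2
      simpa using h2
    have ii2 : IntervalIntegrable g volume t 1 := by
      have h2 := ii1.comp_sub_right t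
      simp only [sub_add_cancel] at h2
      simpa using h2
    rw [intervalIntegrable_iff_integrableOn_Ioc_of_le h1.le] at ii2
    exact ii2.mono_set Ioo_subset_Ioc_self
  -- key formula
  have hKey : ∀ t ∈ Icc (0:ℝ) 1, Φ t = C * ((1-t) ^ (α+δ) * H t) := by
    intro t ht
    rcases eq_or_lt_of_le ht.2 with h1 | h1
    · subst h1
      rw [hΦ₁ 1 (by constructor <;> norm_num)]
      simp [Real.zero_rpow hp.ne']
    · rw [hΦ₁ t ht, subIdentity α δ ht.1 h1]
  have hanti : StrictAntiOn Φ (Icc (0:ℝ) 1) := by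
    intro t₁ ht₁ t₂ ht₂ hlt
    rcases eq_or_lt_of_le ht₂.2 with h1 | h1
    · subst h1
      rw [hKey t₁ ht₁, hKey 1 ht₂, sub_self, Real.zero_rpow hp.ne', zero_mul, mul_zero]
      exact mul_pos hC (mul_pos (Real.rpow_pos_of_pos (by linarith) _)
        (lt_of_lt_of_le hL (hLH t₁ ht₁)))
    · rcases le_or_gt α 0 with hα0 | hα0
      · have hHle : H t₂ ≤ H t₁ := by
          refine setIntegral_mono_on (htInt hα2 hδ1 ht₂) (htInt hα2 hδ1 ht₁)
            measurableSet_Ioo (fun u hu => ?_)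
          have hb1 : 0 < u + t₁*(2-u) := by nlinarith [ht₁.1, hu.1, hu.2]
          have hb2 : u + t₁*(2-u) ≤ u + t₂*(2-u) := by nlinarith [hu.2]
          have mid : (u + t₂*(2-u)) ^ α ≤ (u + t₁*(2-u)) ^ α :=
            Real.rpow_le_rpow_of_nonpos hb1 hb2 hα0
          exact mul_le_mul_of_nonneg_right
            (mul_le_mul_of_nonneg_left mid (Real.rpow_nonneg hu.1.le _))
            (Real.rpow_nonneg (by linarith [hu.2]) _)
        rw [hKey t₁ ht₁, hKey t₂ ht₂]
        have hHt₁pos : 0 < H t₁ := lt_of_lt_of_le hL (hLH t₁ ht₁)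
        have r2 : (0:ℝ) ≤ (1-t₂) ^ (α+δ) := Real.rpow_nonneg (by linarith) _
        have rlt : (1-t₂) ^ (α+δ) < (1-t₁) ^ (α+δ) :=
          Real.rpow_lt_rpow (by linarith) (by linarith) hp
        calc C * ((1-t₂) ^ (α+δ) * H t₂) ≤ C * ((1-t₂) ^ (α+δ) * H t₁) :=
              mul_le_mul_of_nonneg_left (mul_le_mul_of_nonneg_left hHle r2) hC.le
          _ < C * ((1-t₁) ^ (α+δ) * H t₁) :=
              mul_lt_mul_of_pos_left (mul_lt_mul_of_pos_right rlt hHt₁pos) hC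
      · rw [hΦ₁ t₁ ht₁, hΦ₁ t₂ ht₂]
        refine mul_lt_mul_of_pos_left ?_ hC
        have i22 := intPart t₂ ht₂
        have i11 := intPart t₁ ht₁
        have i12 : IntegrableOn (fun s => (s^2 - t₁^2) ^ α * (1-s) ^ (δ-1)) (Ioo t₂ 1) :=
          i11.mono_set (Ioo_subset_Ioo hlt.le le_rfl)
        have stepA : (∫ s in Ioo t₂ 1, (s^2-t₂^2) ^ α * (1-s) ^ (δ-1))
            ≤ ∫ s in Ioo t₂ 1, (s^2-t₁^2) ^ α * (1-s) ^ (δ-1) := by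
          refine setIntegral_mono_on i22 i12 measurableSet_Ioo (fun s hs => ?_)
          refine mul_le_mul_of_nonneg_right
            (Real.rpow_le_rpow (by nlinarith [ht₂.1, hs.1]) (by nlinarith [ht₁.1]) hα0.le)
            (Real.rpow_nonneg (by linarith [hs.2]) _)
        have hsplit : Ioo t₁ 1 = Ioc t₁ t₂ ∪ Ioo t₂ 1 := (Ioc_union_Ioo_eq_Ioo hlt.le h1).symm
        have idisj : Disjoint (Ioc t₁ t₂) (Ioo t₂ 1) := by
          refine disjoint_left.2 (fun x hx hx' => ?_)
          exact absurd hx.2 (not_le.2 hx'.1)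
        have iIoc : IntegrableOn (fun s => (s^2-t₁^2) ^ α * (1-s) ^ (δ-1)) (Ioc t₁ t₂) :=
          i11.mono_set (fun x hx => ⟨hx.1, lt_of_le_of_lt hx.2 h1⟩)
        have stepB : (∫ s in Ioo t₁ 1, (s^2-t₁^2) ^ α * (1-s) ^ (δ-1))
            = (∫ s in Ioc t₁ t₂, (s^2-t₁^2) ^ α * (1-s) ^ (δ-1))
              + ∫ s in Ioo t₂ 1, (s^2-t₁^2) ^ α * (1-s) ^ (δ-1) := by
          rw [hsplit, setIntegral_union idisj measurableSet_Ioo iIoc i12]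
        have stepC : 0 < ∫ s in Ioc t₁ t₂, (s^2-t₁^2) ^ α * (1-s) ^ (δ-1) := by
          rw [integral_Ioc_eq_integral_Ioo]
          refine posInt hlt (iIoc.mono_set Ioo_subset_Ioc_self) (fun s hs => ?_)
          exact mul_pos (Real.rpow_pos_of_pos (by nlinarith [ht₁.1, hs.1]) _)
            (Real.rpow_pos_of_pos (by linarith [hs.2]) _)
        linarith
  have hΦ0 : Φ 0 = 1 := by
    rw [hΦ₁ 0 ⟨le_rfl, zero_le_one⟩]
    have e : ∀ s ∈ Ioo (0:ℝ) 1,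
        (s^2 - 0^2) ^ α * (1-s) ^ (δ-1) = s ^ (2*δ-(d:ℝ)-1) * (1-s) ^ (δ-1) := by
      intro s hs
      have e1 : (s^2 - 0^2 : ℝ) = s ^ ((2:ℕ):ℝ) := by
        rw [Real.rpow_natCast]; ring
      rw [e1, ← Real.rpow_mul hs.1.le]
      congr 2
      rw [hαdef]; push_cast; ring
    rw [setIntegral_congr_fun measurableSet_Ioo e]
    have eB : (∫ s in Ioo (0:ℝ) 1, s ^ (2*δ-(d:ℝ)-1) * (1-s) ^ (δ-1))
        = Beta (2*δ-(d:ℝ)) δ := rfl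
    rw [eB, hCdef, one_div, inv_mul_cancel₀ hBeta.ne']
  refine ⟨intPart, ?_, hanti, ?_, ?_⟩
  · -- continuity
    refine ContinuousOn.congr ?_ (fun t ht => hKey t ht)
    refine continuousOn_const.mul (ContinuousOn.mul ?_ (HCont hα2 hδ1))
    refine Continuous.continuousOn ?_
    rw [continuous_iff_continuousAt]
    intro x
    exact ContinuousAt.rpow_const (continuous_const.sub continuous_id).continuousAt
      (Or.inr hp.le)
  · -- 0 ≤ Φ ≤ 1
    intro t ht
    constructor
    · rw [hKey t ht]
      exact mul_nonneg hC.le (mul_nonneg (Real.rpow_nonneg (by linarith [ht.2]) _)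
        (le_trans hL.le (hLH t ht)))
    · rcases eq_or_lt_of_le ht.1 with h0 | h0
      · rw [← h0, hΦ0]
      · calc Φ t ≤ Φ 0 := (hanti ⟨le_rfl, zero_le_one⟩ ht h0).le
          _ = 1 := hΦ0
  · -- two-sided bounds
    refine ⟨C*L, C*U, mul_pos hC hL, mul_pos hC hU, fun t ht => ?_⟩
    have hexp : 2*δ - ((d:ℝ)+1)/2 = α + δ := by rw [hαdef]; ring
    rw [hexp, hKey t ht]
    have r0 : (0:ℝ) ≤ (1-t) ^ (α+δ) := Real.rpow_nonneg (by linarith [ht.2]) _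
    constructor
    · calc C*L*(1-t) ^ (α+δ) = C*((1-t) ^ (α+δ)*L) := by ring
        _ ≤ C*((1-t) ^ (α+δ)*H t) :=
          mul_le_mul_of_nonneg_left (mul_le_mul_of_nonneg_left (hLH t ht) r0) hC.le
    · calc C*((1-t) ^ (α+δ)*H t) ≤ C*((1-t) ^ (α+δ)*U) :=
          mul_le_mul_of_nonneg_left (mul_le_mul_of_nonneg_left (hHU t ht) r0) hC.le
        _ = C*U*(1-t) ^ (α+δ) := by ring
end

section
/- Let d be a positive integer and δ > (d+1)/2. Then for every 0 ≤ t ≤ 1, (1/B(2δ−d, δ)) ∫_t^1 (s²−t²)^{δ−(d+1)/2} (1−s)^{δ−1} ds = (1/B(2δ−d−1, δ+1)) ∫_t^1 (s²−t²)^{δ−(d+3)/2} s (1−s)^{δ} ds. -/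
open MeasureTheory Set Filter Topology

lemma Beta_eq_Gamma (a b : ℝ) (ha : 0 < a) (hb : 0 < b) :
    Beta a b = Real.Gamma a * Real.Gamma b / Real.Gamma (a + b) := by
  have hofReal : (Beta a b : ℂ) = Complex.betaIntegral a b := by
    rw [Complex.betaIntegral, intervalIntegral.integral_of_le zero_le_one,
      MeasureTheory.integral_Ioc_eq_integral_Ioo, Beta]
    refine integral_ofReal.symm.trans (setIntegral_congr_fun measurableSet_Ioo fun x hx => ?_)
    simp_rw [RCLike.ofReal_mul, Complex.coe_algebraMap,
      Complex.ofReal_cpow hx.1.le, Complex.ofReal_cpow (by linarith [hx.2] : (0:ℝ) ≤ 1 - x)]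
    push_cast
    ring
  have hG := Complex.Gamma_mul_Gamma_eq_betaIntegral
    (s := (a:ℂ)) (t := (b:ℂ)) (by simpa using ha) (by simpa using hb)
  rw [← hofReal, ← Complex.ofReal_add, Complex.Gamma_ofReal, Complex.Gamma_ofReal,
    Complex.Gamma_ofReal] at hG
  have hGab : Real.Gamma (a + b) ≠ 0 := (Real.Gamma_pos_of_pos (by linarith)).ne'
  have : Real.Gamma a * Real.Gamma b = Real.Gamma (a + b) * Beta a b := by
    exact_mod_cast hG
  field_simp
  linarith [this]

lemma int_shift {t r : ℝ} (hr : -1 < r) (ht : t ≤ 1) :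
    IntegrableOn (fun s : ℝ => (s - t) ^ r) (Ioo t 1) := by
  have h := (intervalIntegral.intervalIntegrable_rpow' (a := 0) (b := 1 - t) hr).comp_sub_right t
  simp only [zero_add, sub_add_cancel] at h
  rw [intervalIntegrable_iff_integrableOn_Ioo_of_le ht] at h
  exact h

lemma int_oneSub {t r : ℝ} (hr : -1 < r) (ht : t ≤ 1) :
    IntegrableOn (fun s : ℝ => (1 - s) ^ r) (Ioo t 1) := by
  have h := (intervalIntegral.intervalIntegrable_rpow' (a := 0) (b := 1 - t) hr).comp_sub_left 1
  simp only [sub_zero, sub_sub_cancel] at h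
  have h2 := h.symm
  rw [intervalIntegrable_iff_integrableOn_Ioo_of_le ht] at h2
  exact h2

lemma key (δ α t : ℝ) (hδ : 0 < δ) (hα : 0 < α) (ht : 0 ≤ t) (ht1 : t < 1) :
    2 * α * ∫ s in Ioo t 1, (s ^ 2 - t ^ 2) ^ (α - 1) * s * (1 - s) ^ δ
      = δ * ∫ s in Ioo t 1, (s ^ 2 - t ^ 2) ^ α * (1 - s) ^ (δ - 1) := by
  set g₂ : ℝ → ℝ := fun s => (s ^ 2 - t ^ 2) ^ (α - 1) * s * (1 - s) ^ δ with hg₂def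
  set g₁ : ℝ → ℝ := fun s => (s ^ 2 - t ^ 2) ^ α * (1 - s) ^ (δ - 1) with hg₁def
  -- basic pointwise facts
  have hsq : ∀ s ∈ Ioo t 1, 0 < s ^ 2 - t ^ 2 := by
    intro s hs; nlinarith [hs.1, hs.2]
  have hspos : ∀ s ∈ Ioo t 1, 0 < s := fun s hs => lt_of_le_of_lt ht hs.1
  -- continuity hence measurability
  have cont1 : ContinuousOn g₁ (Ioo t 1) := by
    apply ContinuousOn.mul
    · exact ContinuousOn.rpow_const (by fun_prop) fun s hs => Or.inl (hsq s hs).ne'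
    · exact ContinuousOn.rpow_const (by fun_prop) fun s hs => Or.inl (by linarith [hs.2])
  have cont2 : ContinuousOn g₂ (Ioo t 1) := by
    apply ContinuousOn.mul
    apply ContinuousOn.mul
    · exact ContinuousOn.rpow_const (by fun_prop) fun s hs => Or.inl (hsq s hs).ne'
    · fun_prop
    · exact ContinuousOn.rpow_const (by fun_prop) fun s hs => Or.inl (by linarith [hs.2])
  -- integrability of g₁
  have hig1 : IntegrableOn g₁ (Ioo t 1) := by
    refine Integrable.mono' (int_oneSub (r := δ - 1) (by linarith) ht1.le)
      (cont1.aestronglyMeasurable measurableSet_Ioo) ?_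
    filter_upwards [ae_restrict_mem measurableSet_Ioo] with s hs
    have h1 := hsq s hs
    have h2 : (0:ℝ) < 1 - s := by linarith [hs.2]
    rw [Real.norm_eq_abs, abs_of_nonneg (by positivity)]
    have : (s ^ 2 - t ^ 2) ^ α ≤ 1 :=
      Real.rpow_le_one h1.le (by nlinarith [hs.2, hspos s hs]) hα.le
    calc (s ^ 2 - t ^ 2) ^ α * (1 - s) ^ (δ - 1) ≤ 1 * (1 - s) ^ (δ - 1) := by
          apply mul_le_mul_of_nonneg_right this (by positivity)
      _ = (1 - s) ^ (δ - 1) := one_mul _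
  -- integrability of g₂
  have hig2 : IntegrableOn g₂ (Ioo t 1) := by
    refine Integrable.mono' ((int_shift (r := α - 1) (by linarith) ht1.le).mul_const
      (max 1 (2 ^ (α - 1)))) (cont2.aestronglyMeasurable measurableSet_Ioo) ?_
    filter_upwards [ae_restrict_mem measurableSet_Ioo] with s hs
    have h1 := hsq s hs
    have h2 : (0:ℝ) < 1 - s := by linarith [hs.2]
    have h3 := hspos s hs
    have h4 : (0:ℝ) < s - t := by linarith [hs.1]
    rw [Real.norm_eq_abs, abs_of_nonneg (by positivity)]
    have hfac : (s ^ 2 - t ^ 2) ^ (α - 1) = (s - t) ^ (α - 1) * (s + t) ^ (α - 1) := by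
      rw [← Real.mul_rpow h4.le (by linarith)]; ring_nf
    show (s ^ 2 - t ^ 2) ^ (α - 1) * s * (1 - s) ^ δ ≤ (s - t) ^ (α - 1) * max 1 (2 ^ (α - 1))
    rw [hfac]
    have hone : (1 - s) ^ δ ≤ 1 := Real.rpow_le_one h2.le (by linarith) hδ.le
    have hkey : (s + t) ^ (α - 1) * s * (1 - s) ^ δ ≤ max 1 (2 ^ (α - 1)) := by
      rcases le_total α 1 with hc | hc
      · have : (s + t) ^ (α - 1) ≤ s ^ (α - 1) :=
          Real.rpow_le_rpow_of_nonpos h3 (by linarith) (by linarith)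
        calc (s + t) ^ (α - 1) * s * (1 - s) ^ δ ≤ s ^ (α - 1) * s * 1 := by
              apply mul_le_mul (mul_le_mul_of_nonneg_right this h3.le) hone (by positivity)
              positivity
          _ = s ^ α := by rw [mul_one, ← Real.rpow_add_one h3.ne']; ring_nf
          _ ≤ 1 := Real.rpow_le_one h3.le hs.2.le hα.le
          _ ≤ max 1 (2 ^ (α - 1)) := le_max_left _ _
      · have : (s + t) ^ (α - 1) ≤ 2 ^ (α - 1) :=
          Real.rpow_le_rpow (by linarith) (by linarith [hs.2, ht1]) (by linarith)
        calc (s + t) ^ (α - 1) * s * (1 - s) ^ δ ≤ 2 ^ (α - 1) * 1 * 1 := by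
              apply mul_le_mul (mul_le_mul this hs.2.le h3.le (by positivity)) hone
                (by positivity) (by positivity)
          _ = 2 ^ (α - 1) := by ring
          _ ≤ max 1 (2 ^ (α - 1)) := le_max_right _ _
    calc (s - t) ^ (α - 1) * (s + t) ^ (α - 1) * s * (1 - s) ^ δ
        = (s - t) ^ (α - 1) * ((s + t) ^ (α - 1) * s * (1 - s) ^ δ) := by ring
      _ ≤ (s - t) ^ (α - 1) * max 1 (2 ^ (α - 1)) :=
          mul_le_mul_of_nonneg_left hkey (by positivity)
  -- the antiderivative
  set F : ℝ → ℝ := fun s => (s ^ 2 - t ^ 2) ^ α * (1 - s) ^ δ with hFdef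
  have hderiv : ∀ s ∈ Ioo t 1, HasDerivAt F (2 * α * g₂ s - δ * g₁ s) s := by
    intro s hs
    have h1 := hsq s hs
    have h2 : (0:ℝ) < 1 - s := by linarith [hs.2]
    have hb : HasDerivAt (fun s : ℝ => s ^ 2 - t ^ 2) (2 * s) s := by
      simpa using (hasDerivAt_pow 2 s).sub_const (t ^ 2)
    have hA := hb.rpow_const (p := α) (Or.inl h1.ne')
    have hc : HasDerivAt (fun s : ℝ => 1 - s) (-1) s := by
      simpa using (hasDerivAt_id s).const_sub 1
    have hB := hc.rpow_const (p := δ) (Or.inl h2.ne')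
    have := hA.fun_mul hB
    convert this using 1
    · rfl
    · rfl
    simp only [hg₁def, hg₂def]
    ring
  have hintF' : IntervalIntegrable (fun s => 2 * α * g₂ s - δ * g₁ s) volume t 1 := by
    rw [intervalIntegrable_iff_integrableOn_Ioo_of_le ht1.le]
    exact (hig2.const_mul _).sub (hig1.const_mul _)
  have hc0 : Continuous fun s : ℝ => s ^ 2 - t ^ 2 := by continuity
  have hc1 : Continuous fun s : ℝ => 1 - s := by continuity
  have htendt : Tendsto F (𝓝[>] t) (𝓝 0) := by
    have h1 := (hc0.tendsto t).rpow_const (p := α) (Or.inr hα.le)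
    have h2 := (hc1.tendsto t).rpow_const (p := δ) (Or.inr hδ.le)
    have := h1.mul h2
    simp only [sub_self, Real.zero_rpow hα.ne', zero_mul] at this
    exact this.mono_left nhdsWithin_le_nhds
  have htend1 : Tendsto F (𝓝[<] 1) (𝓝 0) := by
    have h1 := (hc0.tendsto 1).rpow_const (p := α) (Or.inr hα.le)
    have h2 := (hc1.tendsto 1).rpow_const (p := δ) (Or.inr hδ.le)
    have := h1.mul h2
    simp only [id, sub_self, Real.zero_rpow hδ.ne', mul_zero] at this
    exact this.mono_left nhdsWithin_le_nhds
  have h0 : ∫ s in t..1, (2 * α * g₂ s - δ * g₁ s) = 0 - 0 :=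
    intervalIntegral.integral_eq_sub_of_hasDerivAt_of_tendsto ht1 hderiv hintF' htendt htend1
  rw [intervalIntegral.integral_of_le ht1.le, MeasureTheory.integral_Ioc_eq_integral_Ioo,
    MeasureTheory.integral_sub (hig2.const_mul _) (hig1.const_mul _),
    MeasureTheory.integral_const_mul, MeasureTheory.integral_const_mul] at h0
  linarith [h0]

theorem stmt13 (d : ℕ) (hd : 0 < d) (δ : ℝ) (hδ : ((d : ℝ) + 1) / 2 < δ) :
    ∀ t ∈ Icc (0 : ℝ) 1,
      1 / Beta (2 * δ - (d : ℝ)) δ *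
          ∫ s in Ioo t 1, (s ^ 2 - t ^ 2) ^ (δ - ((d : ℝ) + 1) / 2) * (1 - s) ^ (δ - 1) =
        1 / Beta (2 * δ - (d : ℝ) - 1) (δ + 1) *
          ∫ s in Ioo t 1, (s ^ 2 - t ^ 2) ^ (δ - ((d : ℝ) + 3) / 2) * s * (1 - s) ^ δ := by
  intro t ht
  have hd1 : (1:ℝ) ≤ (d:ℝ) := by exact_mod_cast hd
  have hδ0 : 0 < δ := by linarith
  have hα : 0 < δ - ((d:ℝ) + 1) / 2 := by linarith
  rcases eq_or_lt_of_le ht.2 with h1 | h1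
  · rw [h1]
    simp [Set.Ioo_self]
  · have hkey := key δ (δ - ((d:ℝ) + 1) / 2) t hδ0 hα ht.1 h1
    rw [show δ - ((d:ℝ) + 3) / 2 = δ - ((d:ℝ) + 1) / 2 - 1 from by ring]
    set I₁ := ∫ s in Ioo t 1, (s ^ 2 - t ^ 2) ^ (δ - ((d:ℝ) + 1) / 2) * (1 - s) ^ (δ - 1) with hI₁
    set I₂ := ∫ s in Ioo t 1, (s ^ 2 - t ^ 2) ^ (δ - ((d:ℝ) + 1) / 2 - 1) * s * (1 - s) ^ δ
      with hI₂
    have e1 : Real.Gamma (2 * δ - (d:ℝ)) = (2 * δ - (d:ℝ) - 1) * Real.Gamma (2 * δ - (d:ℝ) - 1) := by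
      rw [← Real.Gamma_add_one (by linarith : 2 * δ - (d:ℝ) - 1 ≠ 0)]
      congr 1; ring
    have e2 : Real.Gamma (δ + 1) = δ * Real.Gamma δ := Real.Gamma_add_one hδ0.ne'
    have e3 : Real.Gamma (2 * δ - (d:ℝ) - 1 + (δ + 1)) = Real.Gamma (2 * δ - (d:ℝ) + δ) := by
      congr 1; ring
    rw [Beta_eq_Gamma _ _ (by linarith) hδ0, Beta_eq_Gamma _ _ (by linarith) (by linarith),
      e1, e2, e3]
    have hG1 : 0 < Real.Gamma (2 * δ - (d:ℝ) - 1) := Real.Gamma_pos_of_pos (by linarith)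
    have hG2 : 0 < Real.Gamma δ := Real.Gamma_pos_of_pos hδ0
    have hG3 : 0 < Real.Gamma (2 * δ - (d:ℝ) + δ) := Real.Gamma_pos_of_pos (by linarith)
    have hA : 2 * (δ - ((d:ℝ) + 1) / 2) = 2 * δ - (d:ℝ) - 1 := by ring
    rw [hA] at hkey
    have hne : 2 * δ - (d:ℝ) - 1 ≠ 0 := by linarith
    field_simp [hG1.ne', hG2.ne', hG3.ne', hne]
    linear_combination (-1) * hkey
end

section
/- Let d be a positive integer and δ > d/2. Define Ψ_{d,δ}(t) = (1/B(2δ−d, 2δ)) ∫_t^1 (s²−t²)^{δ−(d+1)/2} (1−s)^{2δ−1} ds for 0 ≤ t ≤ 1 and Ψ_{d,δ}(t) = 0 for t > 1. Then the defining integral converges for every t ∈ [0,1], Ψ_{d,δ} is continuous and strictly decreasing on [0,1] with 0 ≤ Ψ_{d,δ} ≤ 1, there exist positive constants c₁, c₂ with c₁ (1−t)^{3δ−(d+1)/2} ≤ Ψ_{d,δ}(t) ≤ c₂ (1−t)^{3δ−(d+1)/2} for all t ∈ [0,1], and if δ = (d+1)/2 then Ψ_{d,δ}(t) = (1−t)_+^{d+1}.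 -/
open MeasureTheory Set

open Real

lemma img (t : ℝ) (ht : 0 ≤ t) (ht1 : t ≤ 1) :
    (fun v => Real.sqrt (t^2 + v^2)) '' Ioo 0 (Real.sqrt (1 - t^2)) = Ioo t 1 := by
  have h1t : (0:ℝ) ≤ 1 - t^2 := by nlinarith
  ext s
  constructor
  · rintro ⟨v, ⟨hv0, hvw⟩, rfl⟩
    constructor
    · calc t = Real.sqrt (t^2) := by rw [Real.sqrt_sq ht]
        _ < Real.sqrt (t^2 + v^2) := by
          apply Real.sqrt_lt_sqrt (by positivity); nlinarith
    · have : t^2 + v^2 < 1 := by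
        have := (Real.lt_sqrt (le_of_lt hv0)).mp hvw
        nlinarith [Real.sq_sqrt h1t, Real.sqrt_nonneg (1-t^2)]
      calc Real.sqrt (t^2+v^2) < Real.sqrt 1 := Real.sqrt_lt_sqrt (by positivity) this
        _ = 1 := Real.sqrt_one
  · rintro ⟨hts, hs1⟩
    refine ⟨Real.sqrt (s^2 - t^2), ⟨?_, ?_⟩, ?_⟩
    · exact Real.sqrt_pos.mpr (by nlinarith)
    · apply Real.sqrt_lt_sqrt (by nlinarith); nlinarith
    · show Real.sqrt (t^2 + Real.sqrt (s^2-t^2)^2) = s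
      rw [Real.sq_sqrt (by nlinarith : (0:ℝ) ≤ s^2 - t^2)]
      rw [show t^2 + (s^2 - t^2) = s^2 by ring, Real.sqrt_sq (by linarith)]

noncomputable def Hf (α β t v : ℝ) : ℝ :=
  v / Real.sqrt (t^2 + v^2) * ((v^2)^α * max (1 - Real.sqrt (t^2 + v^2)) 0 ^ β)

lemma gderiv (t v : ℝ) (hv : 0 < v) :
    HasDerivAt (fun v => Real.sqrt (t^2 + v^2)) (v / Real.sqrt (t^2 + v^2)) v := by
  have hne : t^2 + v^2 ≠ 0 := by positivity
  have h1 : HasDerivAt (fun v : ℝ => t^2 + v^2) (2*v) v := by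
    simpa using (hasDerivAt_pow 2 v).const_add (t^2)
  have := (Real.hasDerivAt_sqrt hne).comp v h1
  have e : 1 / (2 * Real.sqrt (t^2+v^2)) * (2*v) = v / Real.sqrt (t^2+v^2) := by
    rw [mul_comm, mul_one_div, mul_div_mul_left _ _ two_ne_zero]
  rw [e] at this
  exact this

lemma ginj (t : ℝ) : InjOn (fun v => Real.sqrt (t^2 + v^2)) (Ioo 0 (Real.sqrt (1-t^2))) := by
  have : StrictMonoOn (fun v => Real.sqrt (t^2 + v^2)) (Ioo 0 (Real.sqrt (1-t^2))) := by
    intro a ha b hb hab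
    exact Real.sqrt_lt_sqrt (by positivity) (by nlinarith [ha.1])
  exact this.injOn

lemma hf_eq {α β t : ℝ} (ht : 0 ≤ t) (ht1 : t ≤ 1) {v : ℝ}
    (hv : v ∈ Ioo 0 (Real.sqrt (1-t^2))) :
    |v / Real.sqrt (t^2+v^2)| • ((Real.sqrt (t^2+v^2)^2 - t^2)^α * (1 - Real.sqrt (t^2+v^2))^β)
      = Hf α β t v := by
  obtain ⟨hv0, hvw⟩ := hv
  have hg : Real.sqrt (t^2+v^2) ∈ Ioo t 1 := by
    rw [← img t ht ht1]; exact ⟨v, ⟨hv0, hvw⟩, rfl⟩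
  have hgpos : 0 < Real.sqrt (t^2+v^2) := lt_of_le_of_lt ht hg.1
  rw [smul_eq_mul, abs_of_pos (by positivity), Real.sq_sqrt (by positivity)]
  have : max (1 - Real.sqrt (t^2+v^2)) 0 = 1 - Real.sqrt (t^2+v^2) :=
    max_eq_left (by linarith [hg.2])
  rw [Hf, this]
  ring_nf

lemma cov_int (α β t : ℝ) (ht : 0 ≤ t) (ht1 : t ≤ 1) :
    ∫ s in Ioo t 1, (s^2 - t^2)^α * (1-s)^β
      = ∫ v in Ioo 0 (Real.sqrt (1-t^2)), Hf α β t v := by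
  rw [← img t ht ht1,
    integral_image_eq_integral_abs_deriv_smul measurableSet_Ioo
      (fun x hx => (gderiv t x hx.1).hasDerivWithinAt) (ginj t)]
  exact setIntegral_congr_fun measurableSet_Ioo fun v hv => hf_eq ht ht1 hv

lemma cov_integrable (α β t : ℝ) (ht : 0 ≤ t) (ht1 : t ≤ 1) :
    IntegrableOn (fun s => (s^2 - t^2)^α * (1-s)^β) (Ioo t 1)
      ↔ IntegrableOn (Hf α β t) (Ioo 0 (Real.sqrt (1-t^2))) := by
  rw [← img t ht ht1,
    integrableOn_image_iff_integrableOn_abs_deriv_smul measurableSet_Ioo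
      (fun x hx => (gderiv t x hx.1).hasDerivWithinAt) (ginj t)]
  exact integrableOn_congr_fun (fun v hv => hf_eq ht ht1 hv) measurableSet_Ioo

lemma Hf_nonneg (α β t : ℝ) {v : ℝ} (hv : 0 ≤ v) : 0 ≤ Hf α β t v := by
  have h1 : 0 ≤ v / Real.sqrt (t^2+v^2) := div_nonneg hv (Real.sqrt_nonneg _)
  have h2 : (0:ℝ) ≤ (v^2)^α := Real.rpow_nonneg (sq_nonneg v) α
  have h3 : (0:ℝ) ≤ max (1 - Real.sqrt (t^2+v^2)) 0 ^ β :=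
    Real.rpow_nonneg (le_max_right _ _) β
  exact mul_nonneg h1 (mul_nonneg h2 h3)

lemma Hf_bound (α β t : ℝ) (hβ : 0 < β) {v : ℝ} (hv : 0 < v) :
    ‖Hf α β t v‖ ≤ v ^ (2*α) := by
  have hsq : v ≤ Real.sqrt (t^2+v^2) := by
    have h := Real.sqrt_le_sqrt (by nlinarith : v^2 ≤ t^2+v^2)
    rwa [Real.sqrt_sq hv.le] at h
  have hgpos : 0 < Real.sqrt (t^2+v^2) := lt_of_lt_of_le hv hsq
  have h1 : v / Real.sqrt (t^2+v^2) ≤ 1 := (div_le_one hgpos).mpr hsq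
  have h2 : (v^2)^α = v^(2*α) := by
    rw [← Real.rpow_natCast v 2, ← Real.rpow_mul hv.le]; norm_num
  have h3 : max (1 - Real.sqrt (t^2+v^2)) 0 ^ β ≤ 1 :=
    Real.rpow_le_one (le_max_right _ _)
      (max_le (by linarith [Real.sqrt_nonneg (t^2+v^2)]) (zero_le_one)) hβ.le
  rw [Real.norm_eq_abs, abs_of_nonneg (Hf_nonneg α β t hv.le), Hf, h2]
  have h2n : (0:ℝ) ≤ v^(2*α) := Real.rpow_nonneg hv.le _
  have h3n : (0:ℝ) ≤ max (1 - Real.sqrt (t^2+v^2)) 0 ^ β := Real.rpow_nonneg (le_max_right _ _) β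
  calc v / Real.sqrt (t^2+v^2) * (v^(2*α) * max (1 - Real.sqrt (t^2+v^2)) 0 ^ β)
      ≤ 1 * (v^(2*α) * 1) := by
        apply mul_le_mul h1 (mul_le_mul_of_nonneg_left h3 h2n) (mul_nonneg h2n h3n)
          zero_le_one
    _ = v^(2*α) := by ring

lemma Hf_contv (α β t : ℝ) (hβ : 0 < β) : ContinuousOn (fun v => Hf α β t v) (Ioi 0) := by
  intro v hv
  have hv : (0:ℝ) < v := hv
  have hgpos : 0 < Real.sqrt (t^2+v^2) := Real.sqrt_pos.mpr (by positivity)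
  have hc : ContinuousAt (fun v : ℝ => Real.sqrt (t^2+v^2)) v :=
    (Real.continuous_sqrt.comp (by continuity)).continuousAt
  apply ContinuousAt.continuousWithinAt
  apply ContinuousAt.mul
  · exact (continuousAt_id.div hc hgpos.ne')
  apply ContinuousAt.mul
  · exact (Real.continuousAt_rpow_const _ _ (Or.inl (by positivity))).comp
      (by continuity : Continuous (fun v : ℝ => v^2)).continuousAt
  · exact (Real.continuousAt_rpow_const _ _ (Or.inr hβ.le)).comp
      ((continuousAt_const.sub hc).max continuousAt_const)

lemma Hf_integrableOn (α β t : ℝ) (hα : -1 < 2*α) (hβ : 0 < β) :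
    IntegrableOn (Hf α β t) (Ioo 0 1) := by
  have hb : IntegrableOn (fun v : ℝ => v ^ (2*α)) (Ioo 0 1) := by
    have := (intervalIntegral.intervalIntegrable_rpow' (a := 0) (b := 1) hα)
    exact ((intervalIntegrable_iff_integrableOn_Ioc_of_le zero_le_one).mp this).mono_set
      Ioo_subset_Ioc_self
  apply hb.mono' (((Hf_contv α β t hβ).mono (Ioo_subset_Ioi_self)).aestronglyMeasurable
    measurableSet_Ioo)
  filter_upwards [ae_restrict_mem measurableSet_Ioo] with v hv
  exact Hf_bound α β t hβ hv.1

lemma Hf_zero (α β t : ℝ) (hβ : 0 < β) {v : ℝ} (hg : 1 ≤ Real.sqrt (t^2+v^2)) :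
    Hf α β t v = 0 := by
  rw [Hf, max_eq_right (by linarith), Real.zero_rpow hβ.ne', mul_zero, mul_zero]

lemma ext_J (α β t : ℝ) (hβ : 0 < β) (ht : 0 ≤ t) (ht1 : t ≤ 1) :
    ∫ v in Ioo 0 (Real.sqrt (1-t^2)), Hf α β t v = ∫ v in Ioo 0 1, Hf α β t v := by
  have h1t : (0:ℝ) ≤ 1 - t^2 := by nlinarith
  have hw1 : Real.sqrt (1-t^2) ≤ 1 := by rw [Real.sqrt_le_one]; nlinarith
  have key : ∀ v ∈ Ioo (0:ℝ) 1, Hf α β t v = (Ioo 0 (Real.sqrt (1-t^2))).indicator (Hf α β t) v := by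
    intro v hv
    by_cases hvw : v < Real.sqrt (1-t^2)
    · rw [indicator_of_mem (mem_Ioo.mpr ⟨hv.1, hvw⟩)]
    · rw [indicator_of_notMem (fun h => hvw h.2)]
      push_neg at hvw
      apply Hf_zero α β t hβ
      have : 1 - t^2 ≤ v^2 := by
        nlinarith [Real.sq_sqrt h1t, hv.1, Real.sqrt_nonneg (1-t^2)]
      rw [show (1:ℝ) = Real.sqrt 1 by rw [Real.sqrt_one]]
      exact Real.sqrt_le_sqrt (by linarith)
  rw [setIntegral_congr_fun measurableSet_Ioo key, integral_indicator measurableSet_Ioo,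
    Measure.restrict_restrict measurableSet_Ioo]
  congr 1
  rw [Ioo_inter_Ioo]
  congr 1 <;> simp [hw1]

lemma Hf_pos (α β : ℝ) (hβ : 0 < β) {t v : ℝ} (ht : 0 ≤ t) (ht1 : t ≤ 1)
    (hv : v ∈ Ioo 0 (Real.sqrt (1-t^2))) : 0 < Hf α β t v := by
  have hg : Real.sqrt (t^2+v^2) ∈ Ioo t 1 := by
    rw [← img t ht ht1]; exact ⟨v, hv, rfl⟩
  have hgpos : 0 < Real.sqrt (t^2+v^2) := Real.sqrt_pos.mpr (by nlinarith [hv.1])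
  have h1 : 0 < v / Real.sqrt (t^2+v^2) := div_pos hv.1 hgpos
  have h2 : (0:ℝ) < (v^2)^α := Real.rpow_pos_of_pos (by nlinarith [hv.1]) α
  have h3 : (0:ℝ) < max (1 - Real.sqrt (t^2+v^2)) 0 ^ β := by
    rw [max_eq_left (by linarith [hg.2])]
    exact Real.rpow_pos_of_pos (by linarith [hg.2]) β
  rw [Hf]; exact mul_pos h1 (mul_pos h2 h3)

lemma J_pos (α β : ℝ) (hα : -1 < 2*α) (hβ : 0 < β) {t : ℝ} (ht : 0 ≤ t) (ht1 : t < 1) :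
    0 < ∫ v in Ioo (0:ℝ) 1, Hf α β t v := by
  have hw : 0 < Real.sqrt (1-t^2) := Real.sqrt_pos.mpr (by nlinarith)
  have hw1 : Real.sqrt (1-t^2) ≤ 1 := by rw [Real.sqrt_le_one]; nlinarith
  rw [setIntegral_pos_iff_support_of_nonneg_ae ?nn (Hf_integrableOn α β t hα hβ)]
  case nn =>
    filter_upwards [ae_restrict_mem measurableSet_Ioo] with v hv using Hf_nonneg α β t hv.1.le
  have hsub : Ioo 0 (Real.sqrt (1-t^2)) ⊆ Function.support (Hf α β t) ∩ Ioo 0 1 := by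
    intro v hv
    exact ⟨ne_of_gt (Hf_pos α β hβ ht ht1.le hv), hv.1, lt_of_lt_of_le hv.2 hw1⟩
  calc (0:ENNReal) < volume (Ioo 0 (Real.sqrt (1-t^2))) := by
        rw [Real.volume_Ioo]; simp [hw]
    _ ≤ _ := measure_mono hsub

lemma Hf_mono (α β : ℝ) (hβ : 0 < β) {t₁ t₂ v : ℝ} (ht1 : 0 ≤ t₁) (ht12 : t₁ ≤ t₂)
    (hv : 0 < v) : Hf α β t₂ v ≤ Hf α β t₁ v := by
  have hg12 : Real.sqrt (t₁^2+v^2) ≤ Real.sqrt (t₂^2+v^2) :=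
    Real.sqrt_le_sqrt (by nlinarith)
  have hg1pos : 0 < Real.sqrt (t₁^2+v^2) := Real.sqrt_pos.mpr (by positivity)
  have h1 : v / Real.sqrt (t₂^2+v^2) ≤ v / Real.sqrt (t₁^2+v^2) :=
    div_le_div_of_nonneg_left hv.le hg1pos hg12
  have h3 : max (1 - Real.sqrt (t₂^2+v^2)) 0 ^ β ≤ max (1 - Real.sqrt (t₁^2+v^2)) 0 ^ β :=
    Real.rpow_le_rpow (le_max_right _ _) (max_le_max (by linarith) (le_refl 0)) hβ.le
  have h2 : (0:ℝ) ≤ (v^2)^α := Real.rpow_nonneg (sq_nonneg v) α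
  apply mul_le_mul h1 (mul_le_mul_of_nonneg_left h3 h2)
    (mul_nonneg h2 (Real.rpow_nonneg (le_max_right _ _) β))
    (div_nonneg hv.le (Real.sqrt_nonneg _))

lemma Hf_strict (α β : ℝ) (hβ : 0 < β) {t₁ t₂ v : ℝ} (ht1 : 0 ≤ t₁) (ht12 : t₁ < t₂)
    (ht2 : t₂ ≤ 1) (hv : v ∈ Ioo 0 (Real.sqrt (1-t₂^2))) :
    Hf α β t₂ v < Hf α β t₁ v := by
  have hg2 : Real.sqrt (t₂^2+v^2) ∈ Ioo t₂ 1 := by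
    rw [← img t₂ (by linarith) ht2]; exact ⟨v, hv, rfl⟩
  have hg12 : Real.sqrt (t₁^2+v^2) < Real.sqrt (t₂^2+v^2) :=
    Real.sqrt_lt_sqrt (by positivity) (by nlinarith)
  have hg1pos : 0 < Real.sqrt (t₁^2+v^2) := Real.sqrt_pos.mpr (by nlinarith [hv.1])
  have h1 : v / Real.sqrt (t₂^2+v^2) ≤ v / Real.sqrt (t₁^2+v^2) :=
    div_le_div_of_nonneg_left hv.1.le hg1pos hg12.le
  have h3 : max (1 - Real.sqrt (t₂^2+v^2)) 0 ^ β < max (1 - Real.sqrt (t₁^2+v^2)) 0 ^ β := by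
    rw [max_eq_left (by linarith [hg2.2]), max_eq_left (by linarith [hg2.2])]
    exact Real.rpow_lt_rpow (by linarith [hg2.2]) (by linarith) hβ
  have h2 : (0:ℝ) < (v^2)^α := Real.rpow_pos_of_pos (by nlinarith [hv.1]) α
  have ha1 : 0 < v / Real.sqrt (t₁^2+v^2) := div_pos hv.1 hg1pos
  exact mul_lt_mul' h1 (mul_lt_mul_of_pos_left h3 h2)
    (mul_nonneg h2.le (Real.rpow_nonneg (le_max_right _ _) β)) ha1

lemma J_strictAnti (α β : ℝ) (hα : -1 < 2*α) (hβ : 0 < β) {t₁ t₂ : ℝ}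
    (ht1 : 0 ≤ t₁) (ht12 : t₁ < t₂) (ht2 : t₂ ≤ 1) :
    ∫ v in Ioo (0:ℝ) 1, Hf α β t₂ v < ∫ v in Ioo (0:ℝ) 1, Hf α β t₁ v := by
  rcases eq_or_lt_of_le ht2 with rfl | ht2'
  · have : ∫ v in Ioo (0:ℝ) 1, Hf α β 1 v = 0 := by
      rw [setIntegral_congr_fun measurableSet_Ioo (g := fun _ => (0:ℝ))
        (fun v hv => Hf_zero α β 1 hβ (by
          have h := Real.sqrt_le_sqrt (show (1:ℝ) ≤ 1^2+v^2 by nlinarith [hv.1])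
          rwa [Real.sqrt_one] at h))]
      simp
    rw [this]
    exact J_pos α β hα hβ ht1 ht12
  · have hi1 := Hf_integrableOn α β t₁ hα hβ
    have hi2 := Hf_integrableOn α β t₂ hα hβ
    have hdiffint : IntegrableOn (fun v => Hf α β t₁ v - Hf α β t₂ v) (Ioo 0 1) := hi1.sub hi2
    have key : 0 < ∫ v in Ioo (0:ℝ) 1, (Hf α β t₁ v - Hf α β t₂ v) := by
      have hw : 0 < Real.sqrt (1-t₂^2) := Real.sqrt_pos.mpr (by nlinarith)
      have hw1 : Real.sqrt (1-t₂^2) ≤ 1 := by rw [Real.sqrt_le_one]; nlinarith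
      rw [setIntegral_pos_iff_support_of_nonneg_ae ?nn hdiffint]
      case nn =>
        filter_upwards [ae_restrict_mem measurableSet_Ioo] with v hv
        simp only [Pi.zero_apply]
        have := Hf_mono α β hβ ht1 ht12.le hv.1
        show 0 ≤ Hf α β t₁ v - Hf α β t₂ v
        linarith
      have hsub : Ioo 0 (Real.sqrt (1-t₂^2))
          ⊆ Function.support (fun v => Hf α β t₁ v - Hf α β t₂ v) ∩ Ioo 0 1 := by
        intro v hv
        refine ⟨ne_of_gt ?_, hv.1, lt_of_lt_of_le hv.2 hw1⟩
        have := Hf_strict α β hβ ht1 ht12 ht2 hv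
        show 0 < Hf α β t₁ v - Hf α β t₂ v
        linarith
      calc (0:ENNReal) < volume (Ioo 0 (Real.sqrt (1-t₂^2))) := by
            rw [Real.volume_Ioo]; simp [hw]
        _ ≤ _ := measure_mono hsub
    rw [integral_sub hi1 hi2] at key
    linarith

lemma rpow_base_cont (β : ℝ) (hβ : 0 < β) : Continuous (fun x : ℝ => x ^ β) := by
  rw [continuous_iff_continuousAt]
  intro x
  exact Real.continuousAt_rpow_const _ _ (Or.inr hβ.le)

lemma J_cont (α β : ℝ) (hα : -1 < 2*α) (hβ : 0 < β) :
    ContinuousOn (fun t => ∫ v in Ioo (0:ℝ) 1, Hf α β t v) (Icc 0 1) := by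
  apply continuousOn_of_dominated (bound := fun v => v ^ (2*α))
  · intro t _
    exact (Hf_integrableOn α β t hα hβ).aestronglyMeasurable
  · intro t _
    filter_upwards [ae_restrict_mem measurableSet_Ioo] with v hv
    exact Hf_bound α β t hβ hv.1
  · have := (intervalIntegral.intervalIntegrable_rpow' (a := 0) (b := 1) hα)
    exact ((intervalIntegrable_iff_integrableOn_Ioc_of_le zero_le_one).mp this).mono_set
      Ioo_subset_Ioc_self
  · filter_upwards [ae_restrict_mem measurableSet_Ioo] with v hv
    have hv0 : (0:ℝ) < v := hv.1
    have hsq : Continuous fun t : ℝ => Real.sqrt (t^2+v^2) :=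
      Real.continuous_sqrt.comp (by continuity)
    have hpos : ∀ t : ℝ, 0 < Real.sqrt (t^2+v^2) :=
      fun t => Real.sqrt_pos.mpr (by positivity)
    apply Continuous.continuousOn
    apply Continuous.mul
    · exact continuous_const.div hsq (fun t => (hpos t).ne')
    apply Continuous.mul continuous_const
    exact (rpow_base_cont β hβ).comp ((continuous_const.sub hsq).max continuous_const)

lemma shift_rpow_integrable (t p : ℝ) (hp : -1 < p) (ht : t ≤ 1) :
    IntegrableOn (fun s => (s - t) ^ p) (Ioo t 1) := by
  have h := (intervalIntegral.intervalIntegrable_rpow' (a := 0) (b := 1 - t) hp).comp_sub_right t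
  simp only [zero_add, sub_add_cancel] at h
  exact ((intervalIntegrable_iff_integrableOn_Ioc_of_le ht).mp h).mono_set Ioo_subset_Ioc_self

lemma one_sub_integrable (a b β : ℝ) (hβ : 0 < β) :
    IntegrableOn (fun s => (1 - s) ^ β) (Ioo a b) := by
  have : Continuous (fun s : ℝ => (1 - s) ^ β) :=
    (rpow_base_cont β hβ).comp (continuous_const.sub continuous_id)
  exact (this.integrableOn_Icc).mono_set Ioo_subset_Icc_self

lemma int_shift_s18 (t p : ℝ) (hp : -1 < p) (ht : t ≤ 1) :
    ∫ s in Ioo t 1, (s - t) ^ p = (1-t) ^ (p+1) / (p+1) := by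
  rw [← integral_Ioc_eq_integral_Ioo, ← intervalIntegral.integral_of_le ht,
    intervalIntegral.integral_comp_sub_right (fun x => x ^ p) t,
    integral_rpow (Or.inl hp)]
  rw [sub_self, Real.zero_rpow (by linarith : p + 1 ≠ 0)]
  ring

lemma int_one_sub (t p : ℝ) (hp : -1 < p) (ht : t ≤ 1) :
    ∫ s in Ioo t 1, (1 - s) ^ p = (1-t) ^ (p+1) / (p+1) := by
  rw [← integral_Ioc_eq_integral_Ioo, ← intervalIntegral.integral_of_le ht,
    intervalIntegral.integral_comp_sub_left (fun x => x ^ p) 1,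
    integral_rpow (Or.inl hp)]
  rw [sub_self, Real.zero_rpow (by linarith : p + 1 ≠ 0)]
  ring

lemma Fi_integrable (α β t : ℝ) (hα : -1 < 2*α) (hβ : 0 < β) (ht : 0 ≤ t) (ht1 : t ≤ 1) :
    IntegrableOn (fun s => (s^2 - t^2)^α * (1-s)^β) (Ioo t 1) := by
  rw [cov_integrable α β t ht ht1]
  have hw1 : Real.sqrt (1-t^2) ≤ 1 := by rw [Real.sqrt_le_one]; nlinarith
  exact (Hf_integrableOn α β t hα hβ).mono_set (Ioo_subset_Ioo_right hw1)

lemma I_eq_J (α β t : ℝ) (hβ : 0 < β) (ht : 0 ≤ t) (ht1 : t ≤ 1) :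
    ∫ s in Ioo t 1, (s^2 - t^2)^α * (1-s)^β = ∫ v in Ioo (0:ℝ) 1, Hf α β t v := by
  rw [cov_int α β t ht ht1, ext_J α β t hβ ht ht1]

lemma I_upper (α β : ℝ) (hα : -1 < 2*α) (hβ : 0 < β) :
    ∃ C, 0 < C ∧ ∀ t ∈ Icc (0:ℝ) 1,
      (∫ s in Ioo t 1, (s^2 - t^2)^α * (1-s)^β) ≤ C * (1-t)^(α+β+1) := by
  have hα1 : (0:ℝ) < α + 1 := by linarith
  have hα2 : (0:ℝ) < 2*α + 1 := by linarith
  set C : ℝ := max ((2:ℝ)^α/(α+1)) (max (1/(α+1)) (((1/2):ℝ)^α/(2*α+1))) with hC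
  have hCpos : 0 < C := by
    have : (0:ℝ) < 1/(α+1) := by positivity
    calc (0:ℝ) < 1/(α+1) := this
      _ ≤ max (1/(α+1)) (((1/2):ℝ)^α/(2*α+1)) := le_max_left _ _
      _ ≤ C := le_max_right _ _
  refine ⟨C, hCpos, fun t ht => ?_⟩
  obtain ⟨ht0, ht1⟩ := ht
  have h1t : (0:ℝ) ≤ 1 - t := by linarith
  have hsum : β + (α+1) ≠ 0 := ne_of_gt (by linarith)
  have hsplit : (1-t)^(α+β+1) = (1-t)^β * (1-t)^(α+1) := by
    rw [show α+β+1 = β+(α+1) by ring, Real.rpow_add' h1t hsum]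
  have hrn : (0:ℝ) ≤ (1-t)^(α+β+1) := Real.rpow_nonneg h1t _
  rcases le_or_gt 0 α with hα0 | hα0
  · -- α ≥ 0
    have step1 : (∫ s in Ioo t 1, (s^2 - t^2)^α * (1-s)^β)
        ≤ ∫ s in Ioo t 1, (2:ℝ)^α * (1-t)^β * (s-t)^α := by
      apply setIntegral_mono_on (Fi_integrable α β t hα hβ ht0 ht1)
        (((shift_rpow_integrable t α (by linarith) ht1).const_mul _)) measurableSet_Ioo
      intro s hs
      obtain ⟨hts, hs1⟩ := hs
      have e1 : (s^2 - t^2)^α ≤ (2:ℝ)^α * (s-t)^α := by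
        calc (s^2 - t^2)^α ≤ (2*(s-t))^α :=
              Real.rpow_le_rpow (by nlinarith) (by nlinarith) hα0
          _ = (2:ℝ)^α * (s-t)^α := Real.mul_rpow (by norm_num) (by linarith)
      have e2 : (1-s)^β ≤ (1-t)^β := Real.rpow_le_rpow (by linarith) (by linarith) hβ.le
      calc (s^2 - t^2)^α * (1-s)^β ≤ ((2:ℝ)^α * (s-t)^α) * (1-t)^β :=
            mul_le_mul e1 e2 (Real.rpow_nonneg (by linarith) _) (mul_nonneg (Real.rpow_nonneg (by norm_num) _) (Real.rpow_nonneg (by linarith) _))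
        _ = (2:ℝ)^α * (1-t)^β * (s-t)^α := by ring
    have step2 : ∫ s in Ioo t 1, (2:ℝ)^α * (1-t)^β * (s-t)^α
        = (2:ℝ)^α * (1-t)^β * ((1-t)^(α+1)/(α+1)) := by
      rw [integral_const_mul, int_shift_s18 t α (by linarith) ht1]
    calc (∫ s in Ioo t 1, (s^2 - t^2)^α * (1-s)^β)
        ≤ (2:ℝ)^α * (1-t)^β * ((1-t)^(α+1)/(α+1)) := step1.trans (le_of_eq step2)
      _ = ((2:ℝ)^α/(α+1)) * (1-t)^(α+β+1) := by rw [hsplit]; ring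
      _ ≤ C * (1-t)^(α+β+1) :=
          mul_le_mul_of_nonneg_right (le_max_left _ _) hrn
  rcases le_or_gt (1/2 : ℝ) t with ht2 | ht2
  · -- α < 0, t ≥ 1/2
    have step1 : (∫ s in Ioo t 1, (s^2 - t^2)^α * (1-s)^β)
        ≤ ∫ s in Ioo t 1, (1-t)^β * (s-t)^α := by
      apply setIntegral_mono_on (Fi_integrable α β t hα hβ ht0 ht1)
        (((shift_rpow_integrable t α (by linarith) ht1).const_mul _)) measurableSet_Ioo
      intro s hs
      obtain ⟨hts, hs1⟩ := hs
      have e1 : (s^2 - t^2)^α ≤ (s-t)^α :=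
        Real.rpow_le_rpow_of_nonpos (by linarith) (by nlinarith) hα0.le
      have e2 : (1-s)^β ≤ (1-t)^β := Real.rpow_le_rpow (by linarith) (by linarith) hβ.le
      calc (s^2 - t^2)^α * (1-s)^β ≤ (s-t)^α * (1-t)^β :=
            mul_le_mul e1 e2 (Real.rpow_nonneg (by linarith) _) (Real.rpow_nonneg (by linarith) _)
        _ = (1-t)^β * (s-t)^α := by ring
    calc (∫ s in Ioo t 1, (s^2 - t^2)^α * (1-s)^β)
        ≤ (1-t)^β * ((1-t)^(α+1)/(α+1)) := by
          rw [← int_shift_s18 t α (by linarith) ht1, ← integral_const_mul]; exact step1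
      _ = (1/(α+1)) * (1-t)^(α+β+1) := by rw [hsplit]; ring
      _ ≤ C * (1-t)^(α+β+1) := by
          apply mul_le_mul_of_nonneg_right _ hrn
          exact le_trans (le_max_left _ _) (le_max_right _ _)
  · -- α < 0, t < 1/2
    have step1 : (∫ s in Ioo t 1, (s^2 - t^2)^α * (1-s)^β)
        ≤ ∫ s in Ioo t 1, (1-t)^β * (s-t)^(2*α) := by
      apply setIntegral_mono_on (Fi_integrable α β t hα hβ ht0 ht1)
        (((shift_rpow_integrable t (2*α) hα ht1).const_mul _)) measurableSet_Ioo
      intro s hs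
      obtain ⟨hts, hs1⟩ := hs
      have hst : (0:ℝ) < s - t := by linarith
      have e1 : (s^2 - t^2)^α ≤ (s-t)^(2*α) := by
        have h2 : ((s-t)^(2:ℕ) : ℝ)^α = (s-t)^(2*α) := by
          rw [← Real.rpow_natCast (s-t) 2, ← Real.rpow_mul hst.le]; norm_num
        calc (s^2 - t^2)^α ≤ ((s-t)^(2:ℕ))^α :=
              Real.rpow_le_rpow_of_nonpos (by positivity) (by nlinarith) hα0.le
          _ = (s-t)^(2*α) := h2
      have e2 : (1-s)^β ≤ (1-t)^β := Real.rpow_le_rpow (by linarith) (by linarith) hβ.le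
      calc (s^2 - t^2)^α * (1-s)^β ≤ (s-t)^(2*α) * (1-t)^β :=
            mul_le_mul e1 e2 (Real.rpow_nonneg (by linarith) _) (Real.rpow_nonneg hst.le _)
        _ = (1-t)^β * (s-t)^(2*α) := by ring
    have hhalf : (1-t)^α ≤ ((1/2):ℝ)^α :=
      Real.rpow_le_rpow_of_nonpos (by norm_num) (by linarith) hα0.le
    have hsplit2 : (1-t)^(2*α+1) = (1-t)^α * (1-t)^(α+1) := by
      rw [show 2*α+1 = α+(α+1) by ring, Real.rpow_add' h1t (ne_of_gt (by linarith))]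
    calc (∫ s in Ioo t 1, (s^2 - t^2)^α * (1-s)^β)
        ≤ (1-t)^β * ((1-t)^(2*α+1)/(2*α+1)) := by
          rw [← int_shift_s18 t (2*α) hα ht1, ← integral_const_mul]; exact step1
      _ = (1-t)^α * ((1/(2*α+1)) * ((1-t)^β * (1-t)^(α+1))) := by rw [hsplit2]; ring
      _ ≤ ((1/2):ℝ)^α * ((1/(2*α+1)) * ((1-t)^β * (1-t)^(α+1))) := by
          apply mul_le_mul_of_nonneg_right hhalf
          positivity
      _ = (((1/2):ℝ)^α/(2*α+1)) * (1-t)^(α+β+1) := by rw [hsplit]; ring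
      _ ≤ C * (1-t)^(α+β+1) := by
          apply mul_le_mul_of_nonneg_right _ hrn
          exact le_trans (le_max_right _ _) (le_max_right _ _)

lemma I_lower (α β : ℝ) (hα : -1 < 2*α) (hβ : 0 < β) :
    ∃ c, 0 < c ∧ ∀ t ∈ Icc (0:ℝ) 1,
      c * (1-t)^(α+β+1) ≤ ∫ s in Ioo t 1, (s^2 - t^2)^α * (1-s)^β := by
  set K : ℝ := min (((1/4):ℝ)^α) ((2:ℝ)^α) with hK
  have hKpos : 0 < K := lt_min (Real.rpow_pos_of_pos (by norm_num) _)
    (Real.rpow_pos_of_pos (by norm_num) _)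
  set c : ℝ := K * ((1/2):ℝ)^(β+1) / (β+1) with hc
  have hcpos : 0 < c := by positivity
  refine ⟨c, hcpos, fun t ht => ?_⟩
  obtain ⟨ht0, ht1⟩ := ht
  rcases eq_or_lt_of_le ht1 with rfl | ht1'
  · rw [sub_self, Real.zero_rpow (ne_of_gt (by linarith) : α+β+1 ≠ 0), mul_zero, Ioo_self,
      setIntegral_empty]
  have h1t : (0:ℝ) < 1 - t := by linarith
  set m : ℝ := (1+t)/2 with hm
  have hm1 : m < 1 := by rw [hm]; linarith
  have htm : t < m := by rw [hm]; linarith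
  -- pointwise lower bound on (m, 1)
  have hpt : ∀ s ∈ Ioo m 1, K * (1-t)^α * (1-s)^β ≤ (s^2 - t^2)^α * (1-s)^β := by
    intro s hs
    obtain ⟨hms, hs1⟩ := hs
    have hst : t < s := lt_trans htm hms
    have hlow : (1-t)/4 ≤ s^2 - t^2 := by nlinarith
    have hhigh : s^2 - t^2 ≤ 2*(1-t) := by nlinarith
    have hKb : K * (1-t)^α ≤ (s^2 - t^2)^α := by
      rcases le_or_gt 0 α with hα0 | hα0
      · calc K * (1-t)^α ≤ ((1/4):ℝ)^α * (1-t)^α :=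
              mul_le_mul_of_nonneg_right (min_le_left _ _) (Real.rpow_nonneg h1t.le _)
          _ = ((1/4) * (1-t))^α := (Real.mul_rpow (by norm_num) h1t.le).symm
          _ ≤ (s^2 - t^2)^α := Real.rpow_le_rpow (by positivity) (by linarith) hα0
      · calc K * (1-t)^α ≤ (2:ℝ)^α * (1-t)^α :=
              mul_le_mul_of_nonneg_right (min_le_right _ _) (Real.rpow_nonneg h1t.le _)
          _ = (2 * (1-t))^α := (Real.mul_rpow (by norm_num) h1t.le).symm
          _ ≤ (s^2 - t^2)^α := Real.rpow_le_rpow_of_nonpos (by nlinarith) hhigh hα0.le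
    exact mul_le_mul_of_nonneg_right hKb (Real.rpow_nonneg (by linarith) _)
  have hFi := Fi_integrable α β t hα hβ ht0 ht1
  have step1 : ∫ s in Ioo m 1, K * (1-t)^α * (1-s)^β
      ≤ ∫ s in Ioo m 1, (s^2 - t^2)^α * (1-s)^β := by
    apply setIntegral_mono_on ((one_sub_integrable m 1 β hβ).const_mul _)
      (hFi.mono_set (Ioo_subset_Ioo_left htm.le)) measurableSet_Ioo hpt
  have step2 : ∫ s in Ioo m 1, (s^2 - t^2)^α * (1-s)^β
      ≤ ∫ s in Ioo t 1, (s^2 - t^2)^α * (1-s)^β := by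
    apply setIntegral_mono_set hFi
    · filter_upwards [ae_restrict_mem measurableSet_Ioo] with s hs
      exact mul_nonneg (Real.rpow_nonneg (by nlinarith [hs.1, hs.2, ht0] : (0:ℝ) ≤ s^2-t^2) _)
        (Real.rpow_nonneg (by linarith [hs.2]) _)
    · exact (Ioo_subset_Ioo_left htm.le).eventuallyLE
  have hval : ∫ s in Ioo m 1, K * (1-t)^α * (1-s)^β
      = K * (1-t)^α * ((1-m)^(β+1)/(β+1)) := by
    rw [integral_const_mul, int_one_sub m β (by linarith) hm1.le]
  have h1m : 1 - m = (1/2) * (1-t) := by rw [hm]; ring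
  have e1 : (1-t)^(α+β+1) = (1-t)^α * (1-t)^(β+1) := by
    rw [show α+β+1 = α+(β+1) by ring]
    exact Real.rpow_add' h1t.le (ne_of_gt (by linarith))
  have hfin : K * (1-t)^α * ((1-m)^(β+1)/(β+1)) = c * (1-t)^(α+β+1) := by
    rw [h1m, Real.mul_rpow (by norm_num) h1t.le, e1, hc]
    ring
  calc c * (1-t)^(α+β+1) = ∫ s in Ioo m 1, K * (1-t)^α * (1-s)^β := by rw [hval, hfin]
    _ ≤ ∫ s in Ioo m 1, (s^2 - t^2)^α * (1-s)^β := step1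
    _ ≤ ∫ s in Ioo t 1, (s^2 - t^2)^α * (1-s)^β := step2

theorem stmt18 (d : ℕ) (hd : 0 < d) (δ : ℝ) (hδ : (d : ℝ) / 2 < δ)
    (Ψ : ℝ → ℝ)
    (hΨ₁ : ∀ t ∈ Icc (0 : ℝ) 1,
      Ψ t = 1 / Beta (2 * δ - (d : ℝ)) (2 * δ) *
        ∫ s in Ioo t 1, (s ^ 2 - t ^ 2) ^ (δ - ((d : ℝ) + 1) / 2) * (1 - s) ^ (2 * δ - 1))
    (hΨ₂ : ∀ t : ℝ, 1 < t → Ψ t = 0) :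
    (∀ t ∈ Icc (0 : ℝ) 1,
      IntegrableOn
        (fun s => (s ^ 2 - t ^ 2) ^ (δ - ((d : ℝ) + 1) / 2) * (1 - s) ^ (2 * δ - 1))
        (Ioo t 1)) ∧
    ContinuousOn Ψ (Icc 0 1) ∧ StrictAntiOn Ψ (Icc 0 1) ∧
    (∀ t ∈ Icc (0 : ℝ) 1, 0 ≤ Ψ t ∧ Ψ t ≤ 1) ∧
    (∃ c₁ c₂ : ℝ, 0 < c₁ ∧ 0 < c₂ ∧
      ∀ t ∈ Icc (0 : ℝ) 1,
        c₁ * (1 - t) ^ (3 * δ - ((d : ℝ) + 1) / 2) ≤ Ψ t ∧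
          Ψ t ≤ c₂ * (1 - t) ^ (3 * δ - ((d : ℝ) + 1) / 2)) ∧
    (δ = ((d : ℝ) + 1) / 2 → ∀ t : ℝ, 0 ≤ t → Ψ t = max (1 - t) 0 ^ ((d : ℝ) + 1)) := by
  have hd1 : (1:ℝ) ≤ (d:ℝ) := by exact_mod_cast hd
  set α : ℝ := δ - ((d : ℝ) + 1) / 2 with hαdef
  set β : ℝ := 2 * δ - 1 with hβdef
  have hα : -1 < 2*α := by rw [hαdef]; push_cast; linarith
  have hβ : 0 < β := by rw [hβdef]; linarith
  have hγ : 3 * δ - ((d : ℝ) + 1) / 2 = α + β + 1 := by rw [hαdef, hβdef]; ring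
  set B : ℝ := Beta (2 * δ - (d : ℝ)) (2 * δ) with hBdef
  -- B equals the integral at t = 0
  have hBeq : B = ∫ s in Ioo (0:ℝ) 1, (s ^ 2 - (0:ℝ) ^ 2) ^ α * (1 - s) ^ β := by
    rw [hBdef, Beta]
    apply setIntegral_congr_fun measurableSet_Ioo
    intro s hs
    have hs0 : (0:ℝ) < s := hs.1
    have h2 : (s^2)^α = s^(2*α) := by
      rw [← Real.rpow_natCast s 2, ← Real.rpow_mul hs0.le]; norm_num
    have hexp : 2*δ - (d:ℝ) - 1 = 2*α := by rw [hαdef]; ring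
    have hexp2 : 2*δ - 1 = β := by rw [hβdef]
    show s ^ (2*δ - (d:ℝ) - 1) * (1-s) ^ (2*δ - 1) = (s^2 - (0:ℝ)^2)^α * (1-s)^β
    rw [show s^2 - (0:ℝ)^2 = s^2 by ring, h2, hexp, hexp2]
  obtain ⟨cl, hclpos, hcl⟩ := I_lower α β hα hβ
  obtain ⟨cu, hcupos, hcu⟩ := I_upper α β hα hβ
  have h01 : (0:ℝ) ∈ Icc (0:ℝ) 1 := ⟨le_refl 0, zero_le_one⟩
  have hBlow : cl ≤ B := by
    have := hcl 0 h01
    rw [sub_zero, Real.one_rpow, mul_one] at this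
    rw [hBeq]; exact this
  have hBpos : 0 < B := lt_of_lt_of_le hclpos hBlow
  -- J form
  have hJ : ∀ t ∈ Icc (0:ℝ) 1,
      (∫ s in Ioo t 1, (s ^ 2 - t ^ 2) ^ α * (1 - s) ^ β) = ∫ v in Ioo (0:ℝ) 1, Hf α β t v :=
    fun t ht => I_eq_J α β t hβ ht.1 ht.2
  have hΨeq : ∀ t ∈ Icc (0:ℝ) 1, Ψ t = (1/B) * ∫ v in Ioo (0:ℝ) 1, Hf α β t v := by
    intro t ht
    rw [hΨ₁ t ht, hJ t ht]
  have hB_J : B = ∫ v in Ioo (0:ℝ) 1, Hf α β 0 v := by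
    rw [hBeq, hJ 0 h01]
  have hJnonneg : ∀ t : ℝ, 0 ≤ ∫ v in Ioo (0:ℝ) 1, Hf α β t v :=
    fun t => setIntegral_nonneg measurableSet_Ioo (fun v hv => Hf_nonneg α β t hv.1.le)
  refine ⟨?_, ?_, ?_, ?_, ?_, ?_⟩
  · -- integrability
    exact fun t ht => Fi_integrable α β t hα hβ ht.1 ht.2
  · -- continuity
    apply ContinuousOn.congr (continuousOn_const.mul (J_cont α β hα hβ))
    intro t ht
    exact hΨeq t ht
  · -- strict antitone
    intro t₁ h₁ t₂ h₂ h12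
    rw [hΨeq t₁ h₁, hΨeq t₂ h₂]
    exact mul_lt_mul_of_pos_left (J_strictAnti α β hα hβ h₁.1 h12 h₂.2) (by positivity)
  · -- 0 ≤ Ψ ≤ 1
    intro t ht
    rw [hΨeq t ht]
    constructor
    · exact mul_nonneg (by positivity) (hJnonneg t)
    · have hle : (∫ v in Ioo (0:ℝ) 1, Hf α β t v) ≤ B := by
        rcases eq_or_lt_of_le ht.1 with rfl | ht0
        · rw [hB_J]
        · rw [hB_J]
          exact (J_strictAnti α β hα hβ (le_refl 0) ht0 ht.2).le
      calc (1/B) * ∫ v in Ioo (0:ℝ) 1, Hf α β t v ≤ (1/B) * B :=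
            mul_le_mul_of_nonneg_left hle (by positivity)
        _ = 1 := by field_simp
  · -- two-sided bounds
    refine ⟨cl/B, cu/B, by positivity, by positivity, fun t ht => ?_⟩
    rw [hγ, hΨ₁ t ht]
    have h1 := hcl t ht
    have h2 := hcu t ht
    constructor
    · calc cl/B * (1-t)^(α+β+1) = (1/B) * (cl * (1-t)^(α+β+1)) := by ring
        _ ≤ (1/B) * ∫ s in Ioo t 1, (s ^ 2 - t ^ 2) ^ α * (1 - s) ^ β :=
            mul_le_mul_of_nonneg_left h1 (by positivity)
    · calc (1/B) * ∫ s in Ioo t 1, (s ^ 2 - t ^ 2) ^ α * (1 - s) ^ β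
          ≤ (1/B) * (cu * (1-t)^(α+β+1)) := mul_le_mul_of_nonneg_left h2 (by positivity)
        _ = cu/B * (1-t)^(α+β+1) := by ring
  · -- special case
    intro hδeq t ht0
    have hα0 : α = 0 := by rw [hαdef]; linarith
    have hβd : β = (d:ℝ) := by rw [hβdef]; linarith
    have hdm1 : (-1:ℝ) < (d:ℝ) := by linarith
    have hIval : ∀ u ∈ Icc (0:ℝ) 1,
        (∫ s in Ioo u 1, (s ^ 2 - u ^ 2) ^ α * (1 - s) ^ β)
          = (1-u)^((d:ℝ)+1)/((d:ℝ)+1) := by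
      intro u hu
      have : (∫ s in Ioo u 1, (s ^ 2 - u ^ 2) ^ α * (1 - s) ^ β)
          = ∫ s in Ioo u 1, (1 - s) ^ ((d:ℝ)) := by
        apply setIntegral_congr_fun measurableSet_Ioo
        intro s _
        simp only [hα0, hβd, Real.rpow_zero, one_mul]
      rw [this, int_one_sub u (d:ℝ) hdm1 hu.2]
    have hBval : B = 1/((d:ℝ)+1) := by
      rw [hBeq, hIval 0 h01, sub_zero, Real.one_rpow]
    rcases le_or_gt t 1 with ht1 | ht1
    · have htm : t ∈ Icc (0:ℝ) 1 := ⟨ht0, ht1⟩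
      rw [hΨ₁ t htm, hIval t htm, hBval, max_eq_left (by linarith)]
      have : (0:ℝ) < (d:ℝ)+1 := by linarith
      field_simp
    · rw [hΨ₂ t ht1, max_eq_right (by linarith), Real.zero_rpow (by linarith)]
end
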